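/- Let p, q, s ≥ 1 with q ≥ s and suppose k/s + (m−k)/q = m/p for some 1 ≤ k ≤ m. Then for all families of complex numbers (a_i) indexed by {1,…,n}^m, (∑_i |a_i|^p)^{1/p} ≤ ∏_{S ⊆ {1,…,m}, |S|=k} (∑_{i_S} (∑_{i_{Ŝ}} |a_i|^q)^{s/q})^{(1/s)·(1/binom(m,k))}. -/

import Mathlib

open NNReal Finset

theorem minkowski_sum {τ κ' : Type*} [Fintype κ'] (T : Finset τ) (F : τ → κ' → ℝ≥0) {r : ℝ}
    (hr : 1 ≤ r) :
    (∑ j, (∑ t ∈ T, F t j) ^ r) ^ (1/r) ≤ ∑ t ∈ T, (∑ j, F t j ^ r) ^ (1/r) := by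
  classical
  induction T using Finset.cons_induction with
  | empty =>
    have e1 : (∑ j : κ', (∑ t ∈ (∅:Finset τ), F t j) ^ r) = 0 := by
      refine Finset.sum_eq_zero fun j _ => ?_
      rw [Finset.sum_empty, NNReal.zero_rpow (by positivity)]
    rw [e1, NNReal.zero_rpow (by positivity), Finset.sum_empty]
  | cons a T ha ih =>
    simp only [Finset.sum_cons]
    calc (∑ j, (F a j + ∑ t ∈ T, F t j) ^ r) ^ (1/r)
        ≤ (∑ j, F a j ^ r) ^ (1/r) + (∑ j, (∑ t ∈ T, F t j) ^ r) ^ (1/r) :=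
          NNReal.Lp_add_le _ _ _ hr
      _ ≤ _ := by exact add_le_add_right ih _

theorem holder_sum {τ κ' : Type*} [Fintype κ'] (T : Finset τ) (u : τ → κ' → ℝ≥0) (w : τ → ℝ≥0)
    (hw : ∀ t ∈ T, w t ≠ 0) (hw1 : ∑ t ∈ T, w t = 1) :
    ∑ j, ∏ t ∈ T, u t j ≤ ∏ t ∈ T, (∑ j, u t j ^ (1/(w t : ℝ))) ^ (w t : ℝ) := by
  classical
  set N : τ → ℝ≥0 := fun t => ∑ j, u t j ^ (1/(w t : ℝ)) with hN
  by_cases hz : ∃ t ∈ T, N t = 0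
  · obtain ⟨t0, ht0, hNt0⟩ := hz
    have hu0 : ∀ j, u t0 j = 0 := by
      intro j
      have := (Finset.sum_eq_zero_iff.mp hNt0) j (Finset.mem_univ j)
      have hwt : (1/(w t0 : ℝ)) ≠ 0 := by
        have := hw t0 ht0
        simp [one_div, this]
      exact ((NNReal.rpow_eq_zero_iff.mp this).1)
    have : ∀ j : κ', ∏ t ∈ T, u t j = 0 := fun j => Finset.prod_eq_zero ht0 (hu0 j)
    simp [this]
  · push_neg at hz
    have hD : (∏ t ∈ T, N t ^ (w t : ℝ)) ≠ 0 := by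
      rw [Finset.prod_ne_zero_iff]
      intro t ht
      simp [NNReal.rpow_eq_zero_iff, hz t ht]
    rw [← div_le_one (lt_of_le_of_ne zero_le (Ne.symm hD))]
    rw [Finset.sum_div]
    have key : ∀ j, (∏ t ∈ T, u t j) / (∏ t ∈ T, N t ^ (w t : ℝ))
        ≤ ∑ t ∈ T, w t * ((u t j ^ (1/(w t:ℝ))) / N t) := by
      intro j
      have := NNReal.geom_mean_le_arith_mean_weighted T w
        (fun t => (u t j ^ (1/(w t:ℝ))) / N t) hw1
      refine le_trans (le_of_eq ?_) this
      rw [div_eq_iff hD, ← Finset.prod_mul_distrib]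
      refine Finset.prod_congr rfl fun t ht => ?_
      rw [NNReal.div_rpow, ← NNReal.rpow_mul, one_div, inv_mul_cancel₀ (by exact_mod_cast hw t ht),
        NNReal.rpow_one, div_mul_cancel₀]
      simp [NNReal.rpow_eq_zero_iff, hz t ht]
    calc ∑ j, (∏ t ∈ T, u t j) / (∏ t ∈ T, N t ^ (w t : ℝ))
        ≤ ∑ j, ∑ t ∈ T, w t * ((u t j ^ (1/(w t:ℝ))) / N t) := Finset.sum_le_sum fun j _ => key j
      _ = ∑ t ∈ T, w t * ((∑ j, u t j ^ (1/(w t:ℝ))) / N t) := by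
          rw [Finset.sum_comm]
          refine Finset.sum_congr rfl fun t _ => ?_
          rw [← Finset.mul_sum, ← Finset.sum_div]
      _ = ∑ t ∈ T, w t := by
          refine Finset.sum_congr rfl fun t ht => ?_
          have : (∑ j, u t j ^ (1/(w t:ℝ))) = N t := rfl
          rw [this, div_self (hz t ht), mul_one]
      _ = 1 := hw1

section Nest
variable {ι κ : Type*} [Fintype κ] [DecidableEq ι]

noncomputable def sumOut (x : ι) (c : ℝ) (f : (ι → κ) → ℝ≥0) : (ι → κ) → ℝ≥0 :=
  fun i => (∑ j, f (Function.update i x j) ^ c) ^ (1/c)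

noncomputable def nest : List ι → (ι → ℝ) → ((ι → κ) → ℝ≥0) → ((ι → κ) → ℝ≥0)
  | [], _, f => f
  | x :: L, e, f => nest L e (sumOut x (e x) f)

theorem nest_nil (e : ι → ℝ) (f : (ι → κ) → ℝ≥0) : nest ([] : List ι) e f = f := rfl

theorem nest_cons (x : ι) (L : List ι) (e : ι → ℝ) (f : (ι → κ) → ℝ≥0) :
    nest (x :: L) e f = nest L e (sumOut x (e x) f) := rfl

theorem sumOut_mono {x : ι} {c : ℝ} (hc : 0 ≤ c) {f g : (ι → κ) → ℝ≥0} (h : ∀ i, f i ≤ g i) :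
    ∀ i, sumOut x c f i ≤ sumOut x c g i := fun i =>
  NNReal.rpow_le_rpow (Finset.sum_le_sum fun j _ => NNReal.rpow_le_rpow (h _) hc)
    (by positivity)

theorem nest_mono {L : List ι} {e : ι → ℝ} (he : ∀ x, 0 ≤ e x) {f g : (ι → κ) → ℝ≥0}
    (h : ∀ i, f i ≤ g i) : ∀ i, nest L e f i ≤ nest L e g i := by
  induction L generalizing f g with
  | nil => exact h
  | cons x L ih => exact ih (sumOut_mono (he x) h)

theorem nest_append (L1 L2 : List ι) (e : ι → ℝ) (f : (ι → κ) → ℝ≥0) :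
    nest (L1 ++ L2) e f = nest L2 e (nest L1 e f) := by
  induction L1 generalizing f with
  | nil => rfl
  | cons x L ih => simp only [List.cons_append, nest]; exact ih _

theorem sumOut_swap {x y : ι} (hxy : x ≠ y) {a b : ℝ} (hb : 1 ≤ b) (hba : b ≤ a)
    (f : (ι → κ) → ℝ≥0) (i : ι → κ) :
    sumOut x a (sumOut y b f) i ≤ sumOut y b (sumOut x a f) i := by
  have hb0 : (0:ℝ) < b := lt_of_lt_of_le one_pos hb
  have ha0 : (0:ℝ) < a := lt_of_lt_of_le (lt_of_lt_of_le one_pos hb) hba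
  have hr1 : (1:ℝ) ≤ a/b := (one_le_div hb0).mpr hba
  have LHS_eq : sumOut x a (sumOut y b f) i
      = ((∑ j, (∑ j', f (Function.update (Function.update i x j) y j') ^ b) ^ (a/b)) ^ (b/a))
          ^ (1/b) := by
    simp only [sumOut]
    have e1 : ∀ j : κ, ((∑ j', f (Function.update (Function.update i x j) y j') ^ b) ^ (1/b)) ^ a
        = (∑ j', f (Function.update (Function.update i x j) y j') ^ b) ^ (a/b) := fun j => by
      rw [← NNReal.rpow_mul]; congr 1; ring
    rw [Finset.sum_congr rfl fun j _ => e1 j, ← NNReal.rpow_mul]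
    congr 1
    field_simp
  have RHS_eq : sumOut y b (sumOut x a f) i
      = (∑ j', (∑ j, (f (Function.update (Function.update i x j) y j') ^ b) ^ (a/b)) ^ (b/a))
          ^ (1/b) := by
    simp only [sumOut]
    congr 1
    refine Finset.sum_congr rfl fun j' _ => ?_
    rw [← NNReal.rpow_mul, show (1/a)*b = b/a by ring]
    congr 1
    refine Finset.sum_congr rfl fun j _ => ?_
    rw [Function.update_comm hxy.symm, ← NNReal.rpow_mul]
    congr 1
    field_simp
  rw [LHS_eq, RHS_eq]
  refine NNReal.rpow_le_rpow ?_ (by positivity)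
  have mink := minkowski_sum (Finset.univ : Finset κ)
    (fun j' j => f (Function.update (Function.update i x j) y j') ^ b) hr1
  rw [show (1:ℝ)/(a/b) = b/a from one_div_div a b] at mink
  exact mink

theorem nest_holder {τ : Type*} (L : List ι) (T : Finset τ) (f : τ → (ι → κ) → ℝ≥0)
    (w : τ → ι → ℝ≥0) (hw0 : ∀ t ∈ T, ∀ x, w t x ≠ 0) (hw1 : ∀ x, ∑ t ∈ T, w t x = 1)
    (i : ι → κ) :
    nest L (fun _ => 1) (fun i' => ∏ t ∈ T, f t i') i
      ≤ ∏ t ∈ T, nest L (fun x => 1/((w t x : ℝ))) (f t) i := by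
  induction L generalizing f with
  | nil => exact le_rfl
  | cons x L ih =>
    simp only [nest]
    have step : ∀ i', sumOut x 1 (fun i'' => ∏ t ∈ T, f t i'') i'
        ≤ ∏ t ∈ T, sumOut x (1/((w t x : ℝ))) (f t) i' := by
      intro i'
      have h1 : sumOut x 1 (fun i'' => ∏ t ∈ T, f t i'') i'
          = ∑ j, ∏ t ∈ T, f t (Function.update i' x j) := by
        simp only [sumOut, NNReal.rpow_one]
        norm_num
      have h2 : ∀ t ∈ T, sumOut x (1/((w t x : ℝ))) (f t) i'
          = (∑ j, f t (Function.update i' x j) ^ (1/((w t x : ℝ)))) ^ ((w t x : ℝ)) := by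
        intro t ht
        simp only [sumOut]
        congr 1
        rw [one_div_one_div]
      rw [h1, Finset.prod_congr rfl h2]
      exact holder_sum T (fun t j => f t (Function.update i' x j)) (fun t => w t x)
        (fun t ht => hw0 t ht x) (hw1 x)
    calc nest L (fun _ => 1) (sumOut x 1 (fun i'' => ∏ t ∈ T, f t i'')) i
        ≤ nest L (fun _ => 1) (fun i' => ∏ t ∈ T, sumOut x (1/((w t x : ℝ))) (f t) i') i :=
          nest_mono (fun _ => zero_le_one) step i
      _ ≤ ∏ t ∈ T, nest L (fun x' => 1/((w t x' : ℝ))) (sumOut x (1/((w t x : ℝ))) (f t)) i :=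
          ih (fun t => sumOut x (1/((w t x : ℝ))) (f t))

def overrideOn (s : Finset ι) (i0 : ι → κ) (g : {x // x ∈ s} → κ) : ι → κ :=
  fun x => if h : x ∈ s then g ⟨x, h⟩ else i0 x

def insertPiEquiv (x : ι) (s : Finset ι) (hx : x ∉ s) :
    ({y // y ∈ insert x s} → κ) ≃ (({y // y ∈ s} → κ) × κ) where
  toFun g := (fun y => g ⟨y.1, Finset.mem_insert_of_mem y.2⟩, g ⟨x, Finset.mem_insert_self x s⟩)
  invFun gj y := if h : y.1 = x then gj.2
    else gj.1 ⟨y.1, (Finset.mem_insert.mp y.2).resolve_left h⟩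
  left_inv g := by
    funext y
    by_cases h : y.1 = x
    · simp only [dif_pos h]
      congr 1
      exact Subtype.ext h.symm
    · simp only [dif_neg h]
  right_inv gj := by
    refine Prod.ext ?_ ?_
    · funext y
      have hyx : (y : ι) ≠ x := fun h => hx (h ▸ y.2)
      simp only [dif_neg hyx]
    · simp

theorem overrideOn_empty_eq (i0 : ι → κ) (g : {x // x ∈ (∅ : Finset ι)} → κ) :
    overrideOn ∅ i0 g = i0 := by
  funext z
  simp [overrideOn]

theorem insertPiEquiv_symm_apply (x : ι) (s : Finset ι) (hx : x ∉ s) (g : {y // y ∈ s} → κ)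
    (j : κ) (y : {y // y ∈ insert x s}) :
    (insertPiEquiv x s hx).symm (g, j) y
      = if h : (y : ι) = x then j else g ⟨y, (Finset.mem_insert.mp y.2).resolve_left h⟩ := rfl

theorem sum_pi_congr {s t : Finset ι} (h : s = t) (F : (ι → κ) → ℝ≥0) (i0 : ι → κ) :
    (∑ g : {y // y ∈ s} → κ, F (overrideOn s i0 g))
      = ∑ g : {y // y ∈ t} → κ, F (overrideOn t i0 g) := by
  subst h; rfl

theorem sum_pi_insert {x : ι} {s : Finset ι} (hx : x ∉ s) (F : (ι → κ) → ℝ≥0) (i0 : ι → κ) :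
    (∑ g : {y // y ∈ insert x s} → κ, F (overrideOn (insert x s) i0 g))
      = ∑ g : {y // y ∈ s} → κ, ∑ j, F (Function.update (overrideOn s i0 g) x j) := by
  have hcomp := Equiv.sum_comp (insertPiEquiv x s hx).symm
    (fun g' => F (overrideOn (insert x s) i0 g'))
  rw [← hcomp, Fintype.sum_prod_type]
  refine Finset.sum_congr rfl fun g _ => Finset.sum_congr rfl fun j _ => ?_
  congr 1
  funext z
  by_cases hzx : z = x
  · subst hzx
    rw [Function.update_self]
    have hz : z ∈ insert z s := Finset.mem_insert_self z s
    simp only [overrideOn, dif_pos hz, insertPiEquiv_symm_apply]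
    simp
  · rw [Function.update_of_ne hzx]
    by_cases hzs : z ∈ s
    · have hz : z ∈ insert x s := Finset.mem_insert_of_mem hzs
      simp only [overrideOn, dif_pos hz, dif_pos hzs, insertPiEquiv_symm_apply]
      rw [dif_neg hzx]
    · have hz : z ∉ insert x s := by
        rw [Finset.mem_insert]
        push_neg
        exact ⟨hzx, hzs⟩
      simp only [overrideOn, dif_neg hz, dif_neg hzs]

theorem nest_block (M : List ι) (hM : M.Nodup) {c : ℝ} (hc : 0 < c) (e : ι → ℝ)
    (he : ∀ x ∈ M, e x = c) (f : (ι → κ) → ℝ≥0) (i0 : ι → κ) :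
    nest M e f i0
      = (∑ g : {x // x ∈ M.toFinset} → κ, f (overrideOn M.toFinset i0 g) ^ c) ^ (1/c) := by
  induction M generalizing f i0 with
  | nil =>
    have h1 : (∑ g : {x // x ∈ ([] : List ι).toFinset} → κ,
        f (overrideOn ([] : List ι).toFinset i0 g) ^ c) = f i0 ^ c := by
      rw [sum_pi_congr (List.toFinset_nil) (fun p => f p ^ c) i0]
      haveI : IsEmpty {x // x ∈ (∅ : Finset ι)} :=
        ⟨fun y => absurd y.2 (Finset.notMem_empty y.1)⟩
      rw [Fintype.sum_unique (fun g : {x // x ∈ (∅ : Finset ι)} → κ =>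
        f (overrideOn ∅ i0 g) ^ c), overrideOn_empty_eq]
    rw [nest_nil, h1, ← NNReal.rpow_mul, mul_one_div, div_self hc.ne', NNReal.rpow_one]
  | cons x M ih =>
    obtain ⟨hx, hM'⟩ := List.nodup_cons.mp hM
    have hxF : x ∉ M.toFinset := by simpa using hx
    have hex : e x = c := he x List.mem_cons_self
    have hterm : ∀ p : ι → κ, (sumOut x (e x) f) p ^ c = ∑ j, f (Function.update p x j) ^ c := by
      intro p
      rw [hex]
      simp only [sumOut]
      rw [← NNReal.rpow_mul, one_div_mul_cancel hc.ne', NNReal.rpow_one]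
    have hrhs : (∑ g : {y // y ∈ (x :: M).toFinset} → κ,
          f (overrideOn (x :: M).toFinset i0 g) ^ c)
        = ∑ g : {y // y ∈ M.toFinset} → κ,
            ∑ j, f (Function.update (overrideOn M.toFinset i0 g) x j) ^ c := by
      rw [sum_pi_congr (List.toFinset_cons) (fun p => f p ^ c) i0]
      exact sum_pi_insert hxF (fun p => f p ^ c) i0
    rw [nest_cons]
    rw [ih hM' (fun y hy => he y (List.mem_cons_of_mem x hy)) (sumOut x (e x) f) i0, hrhs]
    congr 1
    exact Finset.sum_congr rfl fun g _ => hterm _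

theorem nest_out_comm {A : List ι} {x : ι} (hx : x ∉ A) {c : ℝ} (hc : 1 ≤ c) {e : ι → ℝ}
    (he0 : ∀ y, 0 ≤ e y) (he : ∀ y ∈ A, c ≤ e y) (f : (ι → κ) → ℝ≥0) :
    ∀ i, nest A e (sumOut x c f) i ≤ sumOut x c (nest A e f) i := by
  induction A generalizing f with
  | nil => intro i; exact le_rfl
  | cons y A ih =>
    intro i
    have hxy : x ≠ y := fun h => hx (h ▸ (List.mem_cons_self : y ∈ y :: A))
    have h1 : ∀ i', sumOut y (e y) (sumOut x c f) i' ≤ sumOut x c (sumOut y (e y) f) i' :=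
      fun i' => sumOut_swap hxy.symm hc (he y List.mem_cons_self) f i'
    calc nest (y :: A) e (sumOut x c f) i
        = nest A e (sumOut y (e y) (sumOut x c f)) i := by rw [nest_cons]
      _ ≤ nest A e (sumOut x c (sumOut y (e y) f)) i := nest_mono he0 h1 i
      _ ≤ sumOut x c (nest A e (sumOut y (e y) f)) i :=
          ih (fun h => hx (List.mem_cons_of_mem y h))
            (fun z hz => he z (List.mem_cons_of_mem y hz)) _ i

theorem nest_sort (S : Finset ι) {e : ι → ℝ} {cs cq : ℝ} (hcs : 1 ≤ cs) (hsq : cs ≤ cq)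
    (heS : ∀ x ∈ S, e x = cs) (heC : ∀ x, x ∉ S → e x = cq)
    (L : List ι) (hL : L.Nodup) (f : (ι → κ) → ℝ≥0) :
    ∀ i, nest L e f i
      ≤ nest ((L.filter (fun y => ¬ y ∈ S)) ++ (L.filter (fun y => y ∈ S))) e f i := by
  have he0 : ∀ y, 0 ≤ e y := by
    intro y
    by_cases hy : y ∈ S
    · rw [heS y hy]; linarith
    · rw [heC y hy]; linarith
  induction L generalizing f with
  | nil => intro i; exact le_rfl
  | cons x L ih =>
    intro i
    obtain ⟨hxL, hL'⟩ := List.nodup_cons.mp hL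
    by_cases hxS : x ∈ S
    · have hfilt1 : (x :: L).filter (fun y => ¬ y ∈ S) = L.filter (fun y => ¬ y ∈ S) := by
        rw [List.filter_cons_of_neg]
        simpa using hxS
      have hfilt2 : (x :: L).filter (fun y => y ∈ S) = x :: L.filter (fun y => y ∈ S) := by
        rw [List.filter_cons_of_pos]
        simpa using hxS
      rw [hfilt1, hfilt2]
      have hex : e x = cs := heS x hxS
      have step1 : nest (x :: L) e f i = nest L e (sumOut x cs f) i := by
        rw [nest_cons, hex]
      have step2 : nest L e (sumOut x cs f) i
          ≤ nest ((L.filter (fun y => ¬ y ∈ S)) ++ (L.filter (fun y => y ∈ S))) e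
              (sumOut x cs f) i := ih hL' (sumOut x cs f) i
      have hxA : x ∉ L.filter (fun y => ¬ y ∈ S) := fun h => hxL (List.mem_of_mem_filter h)
      have heA : ∀ z ∈ L.filter (fun y => ¬ y ∈ S), cs ≤ e z := by
        intro z hz
        have hzS : ¬ z ∈ S := by simpa using (List.of_mem_filter hz)
        rw [heC z hzS]
        exact hsq
      have comm : ∀ i', nest (L.filter (fun y => ¬ y ∈ S)) e (sumOut x cs f) i'
          ≤ sumOut x cs (nest (L.filter (fun y => ¬ y ∈ S)) e f) i' :=
        nest_out_comm hxA hcs he0 heA f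
      calc nest (x :: L) e f i
          = nest L e (sumOut x cs f) i := step1
        _ ≤ nest ((L.filter (fun y => ¬ y ∈ S)) ++ (L.filter (fun y => y ∈ S))) e
              (sumOut x cs f) i := step2
        _ = nest (L.filter (fun y => y ∈ S)) e
              (nest (L.filter (fun y => ¬ y ∈ S)) e (sumOut x cs f)) i := by
            rw [nest_append]
        _ ≤ nest (L.filter (fun y => y ∈ S)) e
              (sumOut x cs (nest (L.filter (fun y => ¬ y ∈ S)) e f)) i :=
            nest_mono he0 comm i
        _ = nest ((L.filter (fun y => ¬ y ∈ S)) ++ (x :: L.filter (fun y => y ∈ S))) e f i := by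
            rw [nest_append]
            rw [nest_cons, hex]
    · have hfilt1 : (x :: L).filter (fun y => ¬ y ∈ S) = x :: L.filter (fun y => ¬ y ∈ S) := by
        rw [List.filter_cons_of_pos]
        simpa using hxS
      have hfilt2 : (x :: L).filter (fun y => y ∈ S) = L.filter (fun y => y ∈ S) := by
        rw [List.filter_cons_of_neg]
        simpa using hxS
      rw [hfilt1, hfilt2, List.cons_append]
      exact ih hL' (sumOut x (e x) f) i

theorem sum_eq_nest [Fintype ι] (F : (ι → κ) → ℝ≥0) (i0 : ι → κ) :
    (∑ i : ι → κ, F i) = nest (Finset.univ : Finset ι).toList (fun _ => 1) F i0 := by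
  rw [nest_block _ (Finset.nodup_toList _) one_pos _ (fun _ _ => rfl) F i0]
  have h1 : (∑ g : {x // x ∈ (Finset.univ : Finset ι).toList.toFinset} → κ,
        F (overrideOn (Finset.univ : Finset ι).toList.toFinset i0 g) ^ (1:ℝ))
      = ∑ g : {x // x ∈ (Finset.univ : Finset ι)} → κ,
          F (overrideOn (Finset.univ : Finset ι) i0 g) ^ (1:ℝ) :=
    sum_pi_congr (Finset.toList_toFinset _) (fun p => F p ^ (1:ℝ)) i0
  rw [h1]
  have h2 : (∑ g : {x // x ∈ (Finset.univ : Finset ι)} → κ,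
        F (overrideOn (Finset.univ : Finset ι) i0 g) ^ (1:ℝ)) = ∑ i : ι → κ, F i := by
    refine Fintype.sum_equiv
      (⟨fun g x => g ⟨x, Finset.mem_univ x⟩, fun i y => i y.1,
        fun g => funext fun y => rfl, fun i => rfl⟩ :
        ({x // x ∈ (Finset.univ : Finset ι)} → κ) ≃ (ι → κ)) _ _ ?_
    intro g
    rw [NNReal.rpow_one]
    congr 1
    funext z
    simp only [overrideOn, dif_pos (Finset.mem_univ z)]
    rfl
  rw [h2, show (1:ℝ)/1 = 1 from one_div_one, NNReal.rpow_one]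

theorem card_filter_mem_powersetCard {α : Type*} [Fintype α] [DecidableEq α] {k : ℕ}
    (hk : 1 ≤ k) (x : α) :
    ((Finset.powersetCard k (Finset.univ : Finset α)).filter (fun S => x ∈ S)).card
      = (Fintype.card α - 1).choose (k - 1) := by
  have key : ((Finset.powersetCard k (Finset.univ : Finset α)).filter (fun S => x ∈ S)).card
      = (Finset.powersetCard (k-1) ((Finset.univ : Finset α).erase x)).card := by
    refine Finset.card_nbij' (fun S => S.erase x) (fun t => insert x t) ?_ ?_ ?_ ?_
    · intro S hS
      simp only [Finset.mem_coe] at hS ⊢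
      rw [Finset.mem_filter, Finset.mem_powersetCard] at hS
      obtain ⟨⟨hsub, hcard⟩, hxS⟩ := hS
      rw [Finset.mem_powersetCard]
      exact ⟨Finset.erase_subset_erase x hsub, by rw [Finset.card_erase_of_mem hxS, hcard]⟩
    · intro t ht
      simp only [Finset.mem_coe] at ht ⊢
      rw [Finset.mem_powersetCard] at ht
      obtain ⟨hsub, hcard⟩ := ht
      have hxt : x ∉ t := fun hx => (Finset.mem_erase.mp (hsub hx)).1 rfl
      rw [Finset.mem_filter, Finset.mem_powersetCard]
      refine ⟨⟨Finset.subset_univ _, ?_⟩, Finset.mem_insert_self x t⟩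
      rw [Finset.card_insert_of_notMem hxt, hcard]
      omega
    · intro S hS
      simp only [Finset.mem_coe] at hS ⊢
      rw [Finset.mem_filter] at hS
      exact Finset.insert_erase hS.2
    · intro t ht
      simp only [Finset.mem_coe] at ht ⊢
      rw [Finset.mem_powersetCard] at ht
      have hxt : x ∉ t := fun hx => (Finset.mem_erase.mp (ht.1 hx)).1 rfl
      exact Finset.erase_insert hxt
  rw [key, Finset.card_powersetCard, Finset.card_erase_of_mem (Finset.mem_univ x),
    Finset.card_univ]

end Nest


/-- Combine an assignment of coordinates on `S` and on its complement into a
multi-index in `Fin m → Fin n`. -/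
def combineIdx {m n : ℕ} (S : Finset (Fin m))
    (g : {x // x ∈ S} → Fin n) (h : {x // x ∈ Sᶜ} → Fin n) : Fin m → Fin n :=
  fun x => if hx : x ∈ S then g ⟨x, hx⟩ else h ⟨x, Finset.mem_compl.mpr hx⟩

set_option maxHeartbeats 2000000 in
theorem blei_nnreal {m n k : ℕ} (hk1 : 1 ≤ k) (hkm : k ≤ m)
    (p q s : ℝ) (hp : 1 ≤ p) (hq : 1 ≤ q) (hs : 1 ≤ s) (hqs : s ≤ q)
    (hexp : (k : ℝ) / s + ((m : ℝ) - k) / q = (m : ℝ) / p)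
    (b : (Fin m → Fin n) → ℝ≥0) :
    (∑ i : Fin m → Fin n, b i ^ p) ^ (1 / p) ≤
      ∏ S ∈ Finset.powersetCard k (Finset.univ : Finset (Fin m)),
        ((∑ g : {x // x ∈ S} → Fin n,
            (∑ h : {x // x ∈ Sᶜ} → Fin n, b (combineIdx S g h) ^ q) ^ (s / q)) ^
          ((1 / s) * (1 / (Nat.choose m k : ℝ)))) := by
  classical
  have hm1 : 1 ≤ m := le_trans hk1 hkm
  have hp0 : (0:ℝ) < p := lt_of_lt_of_le one_pos hp
  have hq0 : (0:ℝ) < q := lt_of_lt_of_le one_pos hq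
  have hs0 : (0:ℝ) < s := lt_of_lt_of_le one_pos hs
  have hC0 : 0 < m.choose k := Nat.choose_pos hkm
  have hCR : (0:ℝ) < (m.choose k : ℝ) := by exact_mod_cast hC0
  rcases Nat.eq_zero_or_pos n with hn | hn
  · subst hn
    haveI : IsEmpty (Fin m → Fin 0) := ⟨fun f => (f ⟨0, hm1⟩).elim0⟩
    rw [Fintype.sum_empty, NNReal.zero_rpow (by positivity)]
    exact zero_le
  -- abbreviations
  set T := Finset.powersetCard k (Finset.univ : Finset (Fin m)) with hTdef
  have hTcard : T.card = m.choose k := by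
    rw [hTdef, Finset.card_powersetCard, Finset.card_univ, Fintype.card_fin]
  -- binomial identities
  have hmc1 : m * ((m-1).choose (k-1)) = m.choose k * k := by
    have h := Nat.add_one_mul_choose_eq (m-1) (k-1)
    rwa [Nat.sub_add_cancel hm1, Nat.sub_add_cancel hk1] at h
  have hpascal : m.choose k = (m-1).choose (k-1) + (m-1).choose k := by
    have h := (Nat.choose_succ_succ (m-1) (k-1)).symm
    simp only [Nat.succ_eq_add_one] at h
    rw [Nat.sub_add_cancel hm1, Nat.sub_add_cancel hk1] at h
    exact h.symm
  have hc1pos : 0 < (m-1).choose (k-1) := Nat.choose_pos (Nat.sub_le_sub_right hkm 1)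
  have hm0 : (m:ℝ) ≠ 0 := by positivity
  have hmc1R : (m:ℝ) * ((m-1).choose (k-1) : ℝ) = (m.choose k : ℝ) * k := by exact_mod_cast hmc1
  have hpasR : (m.choose k : ℝ) = ((m-1).choose (k-1) : ℝ) + ((m-1).choose k : ℝ) := by
    exact_mod_cast hpascal
  have hc2R : (m:ℝ) * ((m-1).choose k : ℝ) = (m.choose k : ℝ) * ((m:ℝ) - k) := by
    have h1 : (m:ℝ) * ((m-1).choose k : ℝ)
        = (m:ℝ) * (m.choose k : ℝ) - (m:ℝ) * ((m-1).choose (k-1) : ℝ) := by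
      rw [hpasR]; ring
    rw [h1, hmc1R]; ring
  -- the two exponents
  have hkmR : (k:ℝ) ≤ (m:ℝ) := by exact_mod_cast hkm
  have hk0R : (0:ℝ) < k := by exact_mod_cast hk1
  have hpsC : p ≤ s * (m.choose k : ℝ) := by
    have h1 : (k:ℝ)/s ≤ (m:ℝ)/p := by
      have h2 : (0:ℝ) ≤ ((m:ℝ)-k)/q := div_nonneg (by linarith) hq0.le
      linarith [hexp]
    have h2 : (k:ℝ)*p ≤ m*s := by rwa [div_le_div_iff₀ hs0 hp0] at h1
    have h3 : (m:ℝ) ≤ k * (m.choose k : ℝ) := by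
      have hc1R : (1:ℝ) ≤ ((m-1).choose (k-1) : ℝ) := by exact_mod_cast hc1pos
      nlinarith [hmc1R]
    nlinarith
  have hcs1 : 1 ≤ s * (m.choose k : ℝ) / p := by
    rw [le_div_iff₀ hp0]; linarith
  have hcs0 : (0:ℝ) < s * (m.choose k : ℝ) / p := by positivity
  have hcq0 : (0:ℝ) < q * (m.choose k : ℝ) / p := by positivity
  have hcsq : s * (m.choose k : ℝ) / p ≤ q * (m.choose k : ℝ) / p := by
    gcongr
  set cs : ℝ := s * (m.choose k : ℝ) / p with hcsdef
  set cq : ℝ := q * (m.choose k : ℝ) / p with hcqdef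
  set ws : ℝ≥0 := Real.toNNReal (1/cs) with hwsdef
  set wq : ℝ≥0 := Real.toNNReal (1/cq) with hwqdef
  have hwsR : (ws:ℝ) = 1/cs := Real.coe_toNNReal _ (one_div_pos.mpr hcs0).le
  have hwqR : (wq:ℝ) = 1/cq := Real.coe_toNNReal _ (one_div_pos.mpr hcq0).le
  have hwsne : ws ≠ 0 := (Real.toNNReal_pos.mpr (one_div_pos.mpr hcs0)).ne'
  have hwqne : wq ≠ 0 := (Real.toNNReal_pos.mpr (one_div_pos.mpr hcq0)).ne'
  have hw1 : ∀ x : Fin m, (∑ S ∈ T, if x ∈ S then ws else wq) = 1 := by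
    intro x
    rw [Finset.sum_ite, Finset.sum_const, Finset.sum_const]
    have hcard1 : (T.filter (fun S => x ∈ S)).card = (m-1).choose (k-1) := by
      rw [hTdef, card_filter_mem_powersetCard hk1 x, Fintype.card_fin]
    have hcard2 : (T.filter (fun S => ¬ x ∈ S)).card = (m-1).choose k := by
      have h := Finset.card_filter_add_card_filter_not (s := T) (fun S => x ∈ S)
      rw [hcard1, hTcard] at h
      omega
    rw [hcard1, hcard2]
    have key : (((m-1).choose (k-1)) : ℝ) * (1/cs) + (((m-1).choose k) : ℝ) * (1/cq) = 1 := by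
      have hc1R : (((m-1).choose (k-1)) : ℝ) = (m.choose k : ℝ) * k / m := by
        field_simp
        linear_combination hmc1R
      have hc2R' : (((m-1).choose k) : ℝ) = (m.choose k : ℝ) * ((m:ℝ) - k) / m := by
        field_simp
        linear_combination hc2R
      rw [hc1R, hc2R', hcsdef, hcqdef]
      have hexp2 : (k:ℝ)*q*p + ((m:ℝ)-k)*s*p = (m:ℝ)*s*q := by
        have h := hexp
        field_simp [hs0.ne', hq0.ne', hp0.ne'] at h
        linear_combination h
      field_simp
      linear_combination hexp2
    apply NNReal.coe_injective
    push_cast [hwsR, hwqR, nsmul_eq_mul]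
    exact key
  set i0 : Fin m → Fin n := fun _ => ⟨0, hn⟩ with hi0def
  set Lall := (Finset.univ : Finset (Fin m)).toList with hLalldef
  have hLnodup : Lall.Nodup := Finset.nodup_toList _
  have hid1 : (p/(m.choose k : ℝ)) * cq = q := by
    rw [hcqdef]; field_simp
  have hid2 : (1/cq) * cs = s/q := by
    rw [hcsdef, hcqdef]; field_simp
  have hid3 : (1/cs) * (1/p) = (1/s) * (1/(m.choose k : ℝ)) := by
    rw [hcsdef]; field_simp
  have step1 : (∑ i : Fin m → Fin n, b i ^ p)
      = ∑ i : Fin m → Fin n, ∏ _S ∈ T, b i ^ (p / (m.choose k : ℝ)) := by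
    refine Finset.sum_congr rfl fun i _ => ?_
    rw [Finset.prod_const, hTcard,
      ← NNReal.rpow_natCast (b i ^ (p / (m.choose k : ℝ))) (m.choose k),
      ← NNReal.rpow_mul, div_mul_cancel₀ p hCR.ne']
  have step2 : (∑ i : Fin m → Fin n, ∏ _S ∈ T, b i ^ (p / (m.choose k : ℝ)))
      = nest Lall (fun _ => 1) (fun i => ∏ _S ∈ T, b i ^ (p / (m.choose k : ℝ))) i0 :=
    sum_eq_nest _ i0
  have step3 : nest Lall (fun _ => 1) (fun i => ∏ _S ∈ T, b i ^ (p / (m.choose k : ℝ))) i0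
      ≤ ∏ S ∈ T, nest Lall (fun x => 1/(((if x ∈ S then ws else wq) : ℝ≥0) : ℝ))
          (fun i => b i ^ (p / (m.choose k : ℝ))) i0 :=
    nest_holder Lall T (fun _ => fun i => b i ^ (p / (m.choose k : ℝ)))
      (fun S x => if x ∈ S then ws else wq)
      (fun S _ x => by split <;> [exact hwsne; exact hwqne])
      hw1 i0
  have heq : ∀ S : Finset (Fin m),
      (fun x : Fin m => 1/(((if x ∈ S then ws else wq) : ℝ≥0) : ℝ))
        = (fun x => if x ∈ S then cs else cq) := by
    intro S
    funext x
    by_cases hx : x ∈ S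
    · rw [if_pos hx, if_pos hx, hwsR, one_div_one_div]
    · rw [if_neg hx, if_neg hx, hwqR, one_div_one_div]
  have step4 : ∀ S ∈ T, nest Lall (fun x => if x ∈ S then cs else cq)
      (fun i => b i ^ (p / (m.choose k : ℝ))) i0
      ≤ ((∑ g : {x // x ∈ S} → Fin n,
          (∑ h : {x // x ∈ Sᶜ} → Fin n, b (combineIdx S g h) ^ q) ^ (s/q)) ^ (1/cs)) := by
    intro S _hS
    have heS : ∀ x ∈ S, (if x ∈ S then cs else cq) = cs := fun x hx => if_pos hx
    have heC : ∀ x : Fin m, x ∉ S → (if x ∈ S then cs else cq) = cq := fun x hx => if_neg hx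
    have hsort := nest_sort S hcs1 hcsq heS heC Lall hLnodup
      (fun i => b i ^ (p / (m.choose k : ℝ)))
    have hAnodup : (Lall.filter (fun y => ¬ y ∈ S)).Nodup := hLnodup.filter _
    have hBnodup : (Lall.filter (fun y => y ∈ S)).Nodup := hLnodup.filter _
    have hA : (Lall.filter (fun y => ¬ y ∈ S)).toFinset = Sᶜ := by
      ext z
      simp [hLalldef, List.mem_filter, Finset.mem_compl]
    have hB : (Lall.filter (fun y => y ∈ S)).toFinset = S := by
      ext z
      simp [hLalldef, List.mem_filter]
    have heA : ∀ x ∈ Lall.filter (fun y => ¬ y ∈ S),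
        (fun x : Fin m => if x ∈ S then cs else cq) x = cq := by
      intro x hx
      have hxS : ¬ x ∈ S := by
        have := List.of_mem_filter hx
        simpa using this
      exact if_neg hxS
    have heB : ∀ x ∈ Lall.filter (fun y => y ∈ S),
        (fun x : Fin m => if x ∈ S then cs else cq) x = cs := by
      intro x hx
      have hxS : x ∈ S := by
        have := List.of_mem_filter hx
        simpa using this
      exact if_pos hxS
    have hGA : ∀ i, nest (Lall.filter (fun y => ¬ y ∈ S)) (fun x => if x ∈ S then cs else cq)
        (fun i' => b i' ^ (p / (m.choose k : ℝ))) i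
        = (∑ h : {x // x ∈ Sᶜ} → Fin n, b (overrideOn Sᶜ i h) ^ q) ^ (1/cq) := by
      intro i
      rw [nest_block _ hAnodup hcq0 _ heA _ i]
      congr 1
      calc (∑ g : {x // x ∈ (Lall.filter (fun y => ¬ y ∈ S)).toFinset} → Fin n,
            (fun i' => b i' ^ (p / (m.choose k : ℝ)))
              (overrideOn (Lall.filter (fun y => ¬ y ∈ S)).toFinset i g) ^ cq)
          = ∑ h : {x // x ∈ Sᶜ} → Fin n,
              (fun i' => b i' ^ (p / (m.choose k : ℝ))) (overrideOn Sᶜ i h) ^ cq :=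
            sum_pi_congr hA (fun p' => (b p' ^ (p / (m.choose k : ℝ))) ^ cq) i
        _ = ∑ h : {x // x ∈ Sᶜ} → Fin n, b (overrideOn Sᶜ i h) ^ q := by
            refine Finset.sum_congr rfl fun h _ => ?_
            rw [← NNReal.rpow_mul, hid1]
    calc nest Lall (fun x => if x ∈ S then cs else cq)
          (fun i => b i ^ (p / (m.choose k : ℝ))) i0
        ≤ nest ((Lall.filter (fun y => ¬ y ∈ S)) ++ (Lall.filter (fun y => y ∈ S)))
            (fun x => if x ∈ S then cs else cq) (fun i => b i ^ (p / (m.choose k : ℝ))) i0 :=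
          hsort i0
      _ = nest (Lall.filter (fun y => y ∈ S)) (fun x => if x ∈ S then cs else cq)
            (nest (Lall.filter (fun y => ¬ y ∈ S)) (fun x => if x ∈ S then cs else cq)
              (fun i => b i ^ (p / (m.choose k : ℝ)))) i0 := by rw [nest_append]
      _ = (∑ g : {x // x ∈ S} → Fin n,
            (nest (Lall.filter (fun y => ¬ y ∈ S)) (fun x => if x ∈ S then cs else cq)
              (fun i => b i ^ (p / (m.choose k : ℝ)))) (overrideOn S i0 g) ^ cs) ^ (1/cs) := by
          rw [nest_block _ hBnodup hcs0 _ heB _ i0]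
          congr 1
          exact sum_pi_congr hB (fun p' => (nest (Lall.filter (fun y => ¬ y ∈ S))
            (fun x => if x ∈ S then cs else cq)
            (fun i => b i ^ (p / (m.choose k : ℝ))) p') ^ cs) i0
      _ = (∑ g : {x // x ∈ S} → Fin n,
            (∑ h : {x // x ∈ Sᶜ} → Fin n, b (combineIdx S g h) ^ q) ^ (s/q)) ^ (1/cs) := by
          congr 1
          refine Finset.sum_congr rfl fun g _ => ?_
          rw [hGA (overrideOn S i0 g), ← NNReal.rpow_mul, hid2]
          congr 1
          refine Finset.sum_congr rfl fun h _ => ?_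
          congr 2
          funext z
          by_cases hz : z ∈ S
          · have hz' : z ∉ Sᶜ := by simp [hz]
            simp only [overrideOn, combineIdx, dif_neg hz', dif_pos hz]
          · have hz' : z ∈ Sᶜ := Finset.mem_compl.mpr hz
            simp only [overrideOn, combineIdx, dif_pos hz', dif_neg hz]
  calc (∑ i : Fin m → Fin n, b i ^ p) ^ (1/p)
      = (nest Lall (fun _ => 1) (fun i => ∏ _S ∈ T, b i ^ (p/(m.choose k : ℝ))) i0) ^ (1/p) := by
        rw [step1, step2]
    _ ≤ (∏ S ∈ T, nest Lall (fun x => if x ∈ S then cs else cq)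
          (fun i => b i ^ (p/(m.choose k : ℝ))) i0) ^ (1/p) := by
        refine NNReal.rpow_le_rpow ?_ (by positivity)
        refine le_trans step3 (le_of_eq ?_)
        exact Finset.prod_congr rfl fun S _ => by rw [heq S]
    _ ≤ (∏ S ∈ T, ((∑ g : {x // x ∈ S} → Fin n,
          (∑ h : {x // x ∈ Sᶜ} → Fin n, b (combineIdx S g h) ^ q) ^ (s/q)) ^ (1/cs))) ^ (1/p) :=
        NNReal.rpow_le_rpow (Finset.prod_le_prod' step4) (by positivity)
    _ = ∏ S ∈ T, ((∑ g : {x // x ∈ S} → Fin n,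
          (∑ h : {x // x ∈ Sᶜ} → Fin n, b (combineIdx S g h) ^ q) ^ (s/q)) ^
            ((1/s) * (1/(m.choose k : ℝ)))) := by
        rw [← NNReal.finset_prod_rpow]
        refine Finset.prod_congr rfl fun S _ => ?_
        rw [← NNReal.rpow_mul, hid3]

/-- Blei-type inequality with general exponents (remark after Theorem 2.2). -/
theorem blei_general_exponents {m n k : ℕ} (hk1 : 1 ≤ k) (hkm : k ≤ m)
    (p q s : ℝ) (hp : 1 ≤ p) (hq : 1 ≤ q) (hs : 1 ≤ s) (hqs : s ≤ q)
    (hexp : (k : ℝ) / s + ((m : ℝ) - k) / q = (m : ℝ) / p)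
    (a : (Fin m → Fin n) → ℂ) :
    (∑ i : Fin m → Fin n, ‖a i‖ ^ p) ^ (1 / p) ≤
      ∏ S ∈ Finset.powersetCard k (Finset.univ : Finset (Fin m)),
        ((∑ g : {x // x ∈ S} → Fin n,
            (∑ h : {x // x ∈ Sᶜ} → Fin n,
              ‖a (combineIdx S g h)‖ ^ q) ^ (s / q)) ^
          ((1 / s) * (1 / (Nat.choose m k : ℝ)))) := by
  have key := blei_nnreal hk1 hkm p q s hp hq hs hqs hexp (fun i => ‖a i‖₊)
  have habs : ∀ z : ℂ, ‖z‖ = ((‖z‖₊ : ℝ≥0) : ℝ) := fun z => by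
    rw [coe_nnnorm]
  have hL : (∑ i : Fin m → Fin n, ‖a i‖ ^ p)
      = ((∑ i : Fin m → Fin n, ‖a i‖₊ ^ p : ℝ≥0) : ℝ) := by
    rw [NNReal.coe_sum]
    exact Finset.sum_congr rfl fun i _ => by
      rw [habs (a i)]
      exact (NNReal.coe_rpow _ _).symm
  have hRprod : (∏ S ∈ Finset.powersetCard k (Finset.univ : Finset (Fin m)),
        ((∑ g : {x // x ∈ S} → Fin n,
            (∑ h : {x // x ∈ Sᶜ} → Fin n,
              ‖a (combineIdx S g h)‖ ^ q) ^ (s / q)) ^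
          ((1 / s) * (1 / (Nat.choose m k : ℝ)))))
      = ((∏ S ∈ Finset.powersetCard k (Finset.univ : Finset (Fin m)),
          ((∑ g : {x // x ∈ S} → Fin n,
              (∑ h : {x // x ∈ Sᶜ} → Fin n,
                ‖a (combineIdx S g h)‖₊ ^ q) ^ (s / q)) ^
            ((1 / s) * (1 / (Nat.choose m k : ℝ)))) : ℝ≥0) : ℝ) := by
    rw [NNReal.coe_prod]
    refine Finset.prod_congr rfl fun S _ => ?_
    rw [NNReal.coe_rpow]
    congr 1
    rw [NNReal.coe_sum]
    refine Finset.sum_congr rfl fun g _ => ?_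
    rw [NNReal.coe_rpow]
    congr 1
    rw [NNReal.coe_sum]
    refine Finset.sum_congr rfl fun h _ => ?_
    rw [habs (a (combineIdx S g h))]
    exact (NNReal.coe_rpow _ _).symm
  rw [hL, hRprod, ← NNReal.coe_rpow]
  exact NNReal.coe_le_coe.mpr key
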